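/- arXiv:2212.14499 — 2 statements merged into one kernel-verified Lean document; each statement's English description precedes it below -/
import Mathlib

section
/- Let N ≥ 2, Φ = e^{πi/N}·diag(-1,1,…,1), and U_θ the rotation-by-θ matrix in the first two coordinates. Let a, b be the generators of the group G = ⟨a, b | (ab)^k a = (ba)^k b⟩. For θ ∈ [0, π/2], the assignment a ↦ Φ, b ↦ U_θ Φ U_{-θ} extends to a group homomorphism G → SU(N) if and only if (2k+1)θ ∈ πℤ. -/
/-- The rotation by `θ` in the first two coordinates of `ℂ^{n+2}`, an element of
`SU(n+2)`. -/
noncomputable def Urot (n : ℕ) (θ : ℝ) : Matrix (Fin (n + 2)) (Fin (n + 2)) ℂ :=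
  fun i j =>
    if i = 0 ∧ j = 0 then (Real.cos θ : ℂ)
    else if i = 0 ∧ j = 1 then (-Real.sin θ : ℂ)
    else if i = 1 ∧ j = 0 then (Real.sin θ : ℂ)
    else if i = 1 ∧ j = 1 then (Real.cos θ : ℂ)
    else if i = j then 1 else 0

def Dmat (n : ℕ) : Matrix (Fin (n + 2)) (Fin (n + 2)) ℂ :=
  Matrix.diagonal (fun i : Fin (n + 2) => if (i : ℕ) = 0 then (-1 : ℂ) else 1)

section helper
open Matrix
variable {n : ℕ}

lemma fin_zero_ne_one : (0 : Fin (n+2)) ≠ 1 := by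
  simp [Fin.ext_iff]

lemma val0_iff (i : Fin (n+2)) : (i:ℕ) = 0 ↔ i = 0 := by
  rw [Fin.ext_iff, Fin.val_zero]

lemma sum_two (f : Fin (n+2) → ℂ) (hf : ∀ l, l ≠ 0 → l ≠ 1 → f l = 0) :
    ∑ l, f l = f 0 + f 1 := by
  rw [← Finset.sum_pair fin_zero_ne_one]
  refine (Finset.sum_subset (Finset.subset_univ _) ?_).symm
  intro x _ hx
  simp only [Finset.mem_insert, Finset.mem_singleton, not_or] at hx
  exact hf x hx.1 hx.2

lemma Urot_mul (a b : ℝ) : Urot n a * Urot n b = Urot n (a + b) := by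
  ext i j
  rw [Matrix.mul_apply]
  by_cases hi0 : i = 0
  · subst hi0
    rw [sum_two _ (fun l hl0 hl1 => by simp [Urot, hl0, hl1, fin_zero_ne_one, (fin_zero_ne_one (n := n)).symm, Ne.symm hl0])]
    by_cases hj0 : j = 0 <;> by_cases hj1 : j = 1 <;>
      simp [Urot, hj0, hj1, fin_zero_ne_one, Real.cos_add, Real.sin_add] <;>
      first
      | (push_cast; ring1)
      | simp [Ne.symm hj0, Ne.symm hj1]
  · by_cases hi1 : i = 1
    · subst hi1
      rw [sum_two _ (fun l hl0 hl1 => by simp [Urot, hl0, hl1, fin_zero_ne_one, Ne.symm hl0, Ne.symm hl1])]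
      by_cases hj0 : j = 0 <;> by_cases hj1 : j = 1 <;>
        simp [Urot, hj0, hj1, fin_zero_ne_one, (fin_zero_ne_one (n := n)).symm, Real.cos_add, Real.sin_add] <;>
        first
        | (push_cast; ring1)
        | simp [Ne.symm hj0, Ne.symm hj1]
    · rw [Finset.sum_eq_single i (fun l _ hl => by simp [Urot, hi0, hi1, Ne.symm hl]) (by simp)]
      simp [Urot, hi0, hi1]

lemma Urot_zero : Urot n 0 = 1 := by
  ext i j
  by_cases hi0 : i = 0 <;> by_cases hi1 : i = 1 <;> by_cases hij : i = j <;>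
    simp_all [Urot, Matrix.one_apply, fin_zero_ne_one, (fin_zero_ne_one (n := n)).symm] <;>
    simp_all [eq_comm]

lemma Urot_conjTranspose (θ : ℝ) : (Urot n θ)ᴴ = Urot n (-θ) := by
  ext i j
  by_cases hi0 : i = 0 <;> by_cases hi1 : i = 1 <;> by_cases hj0 : j = 0 <;> by_cases hj1 : j = 1 <;>
    simp_all [Urot, Matrix.conjTranspose_apply, fin_zero_ne_one, (fin_zero_ne_one (n := n)).symm,
      eq_comm, ← Complex.ofReal_cos, ← Complex.ofReal_sin, Complex.conj_ofReal]

lemma Dmat_mul_self : Dmat n * Dmat n = 1 := by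
  rw [Dmat, Matrix.diagonal_mul_diagonal]
  ext i j
  rcases eq_or_ne i j with rfl | hij
  · rw [Matrix.diagonal_apply_eq, Matrix.one_apply_eq]
    split_ifs <;> norm_num
  · rw [Matrix.diagonal_apply_ne _ hij, Matrix.one_apply_ne hij]

lemma Dmat_conjTranspose : (Dmat n)ᴴ = Dmat n := by
  rw [Dmat, Matrix.diagonal_conjTranspose]
  have h : (star fun i : Fin (n+2) => if (i:ℕ) = 0 then (-1:ℂ) else 1)
      = fun i : Fin (n+2) => if (i:ℕ) = 0 then (-1:ℂ) else 1 := by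
    funext i
    show star (if (i:ℕ) = 0 then (-1:ℂ) else 1) = _
    split_ifs <;> simp
  rw [h]

lemma det_Dmat : (Dmat n).det = -1 := by
  rw [Dmat, Matrix.det_diagonal]
  rw [Finset.prod_eq_single (0 : Fin (n+2))
    (fun l _ hl => by simp [val0_iff, hl]) (by simp)]
  simp

lemma Urot_mul_Dmat (θ : ℝ) : Urot n θ * Dmat n = Dmat n * Urot n (-θ) := by
  ext i j
  rw [Dmat, Matrix.mul_diagonal, Matrix.diagonal_mul]
  by_cases hi0 : i = 0 <;> by_cases hi1 : i = 1 <;> by_cases hj0 : j = 0 <;> by_cases hj1 : j = 1 <;>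
    simp_all [Urot, fin_zero_ne_one, (fin_zero_ne_one (n := n)).symm, val0_iff, eq_comm]

lemma Urot_pow (θ : ℝ) (m : ℕ) : Urot n θ ^ m = Urot n (m * θ) := by
  induction m with
  | zero => simp [Urot_zero]
  | succ m ih =>
    rw [pow_succ, ih, Urot_mul]
    congr 1
    push_cast
    ring

lemma Urot_eq_one_of_cos (ψ : ℝ) (h : Real.cos ψ = 1) : Urot n ψ = 1 := by
  have hs : Real.sin ψ = 0 := by nlinarith [Real.sin_sq_add_cos_sq ψ]
  have hc' : (Real.cos ψ : ℂ) = 1 := by rw [h]; norm_num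
  have hs' : (Real.sin ψ : ℂ) = 0 := by rw [hs]; norm_num
  ext i j
  by_cases hi0 : i = 0 <;> by_cases hi1 : i = 1 <;> by_cases hj0 : j = 0 <;>
      by_cases hj1 : j = 1 <;> by_cases hij : i = j <;>
    simp_all [Urot, Matrix.one_apply, fin_zero_ne_one, (fin_zero_ne_one (n := n)).symm, eq_comm]

end helper

section main
open Matrix
variable {n : ℕ}

lemma conj_id (θ : ℝ) : Urot n θ * Dmat n * Urot n (-θ) = Dmat n * Urot n (-(2 * θ)) := by
  rw [Urot_mul_Dmat, mul_assoc, Urot_mul]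
  congr 2
  ring

lemma lhs_eq (k : ℕ) (θ : ℝ) (c : ℂ) :
    ((c • Dmat n) * (Urot n θ * (c • Dmat n) * Urot n (-θ))) ^ k * (c • Dmat n) =
      c ^ (2 * k + 1) • (Urot n (-(2 * k * θ)) * Dmat n) := by
  have h1 : (c • Dmat n) * (Urot n θ * (c • Dmat n) * Urot n (-θ))
      = (c * c) • Urot n (-(2 * θ)) := by
    simp only [smul_mul_assoc, mul_smul_comm, smul_smul]
    rw [conj_id, ← mul_assoc, Dmat_mul_self, one_mul]
  rw [h1, smul_pow, Urot_pow]
  simp only [smul_mul_assoc, mul_smul_comm, smul_smul]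
  rw [show c * (c * c) ^ k = c ^ (2 * k + 1) by ring,
    show (k : ℝ) * -(2 * θ) = -(2 * k * θ) by ring]

lemma rhs_eq (k : ℕ) (θ : ℝ) (c : ℂ) :
    (Urot n θ * (c • Dmat n) * Urot n (-θ) * (c • Dmat n)) ^ k *
        (Urot n θ * (c • Dmat n) * Urot n (-θ)) =
      c ^ (2 * k + 1) • (Urot n ((2 * k + 2) * θ) * Dmat n) := by
  have h2 : Urot n θ * (c • Dmat n) * Urot n (-θ) * (c • Dmat n)
      = (c * c) • Urot n (2 * θ) := by
    simp only [smul_mul_assoc, mul_smul_comm, smul_smul]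
    rw [conj_id, mul_assoc, Urot_mul_Dmat, neg_neg, ← mul_assoc, Dmat_mul_self, one_mul]
  rw [h2, smul_pow, Urot_pow]
  simp only [smul_mul_assoc, mul_smul_comm, smul_smul]
  rw [show c * (c * c) ^ k = c ^ (2 * k + 1) by ring, conj_id,
    ← Urot_mul_Dmat, ← mul_assoc, Urot_mul,
    show (k : ℝ) * (2 * θ) + 2 * θ = (2 * k + 2) * θ by ring]

lemma relation_iff (k : ℕ) (θ : ℝ) (c : ℂ) (hc : c ≠ 0) :
    (((c • Dmat n) * (Urot n θ * (c • Dmat n) * Urot n (-θ))) ^ k * (c • Dmat n) =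
      (Urot n θ * (c • Dmat n) * Urot n (-θ) * (c • Dmat n)) ^ k *
        (Urot n θ * (c • Dmat n) * Urot n (-θ))) ↔
      Urot n ((4 * k + 2) * θ) = 1 := by
  rw [lhs_eq, rhs_eq]
  constructor
  · intro h
    have h' : Urot n (-(2 * k * θ)) * Dmat n = Urot n ((2 * k + 2) * θ) * Dmat n :=
      smul_right_injective _ (pow_ne_zero _ hc) h
    have h'' : Urot n (-(2 * k * θ)) = Urot n ((2 * k + 2) * θ) := by
      have := congrArg (· * Dmat n) h'
      simpa [mul_assoc, Dmat_mul_self] using this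
    have := congrArg (Urot n (2 * k * θ) * ·) h''
    simp only [Urot_mul] at this
    rw [show (2 * (k:ℝ) * θ + -(2 * k * θ)) = 0 by ring, Urot_zero] at this
    rw [show (4 * (k:ℝ) + 2) * θ = 2 * k * θ + (2 * k + 2) * θ by ring]
    exact this.symm
  · intro h
    congr 1
    have h2 : Urot n (-(2 * k * θ)) = Urot n (-(2 * k * θ)) * Urot n ((4 * k + 2) * θ) := by
      rw [h, mul_one]
    rw [h2, Urot_mul]
    congr 1
    ring

end main

section su
open Matrix
variable {n : ℕ}

noncomputable def cconst (n : ℕ) : ℂ := Complex.exp (Real.pi * Complex.I / ((n : ℂ) + 2))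

lemma cconst_ne_zero : cconst n ≠ 0 := Complex.exp_ne_zero _

lemma Ncast_ne_zero : ((n : ℂ) + 2) ≠ 0 := by
  have h : ((n : ℂ) + 2) = ((n + 2 : ℕ) : ℂ) := by push_cast; ring
  rw [h]
  exact Nat.cast_ne_zero.mpr (by omega)

lemma conj_cconst :
    (starRingEnd ℂ) (cconst n) = Complex.exp (-(Real.pi * Complex.I / ((n : ℂ) + 2))) := by
  rw [cconst, ← Complex.exp_conj]
  congr 1
  rw [map_div₀, _root_.map_mul, Complex.conj_ofReal, Complex.conj_I]
  rw [show (starRingEnd ℂ) ((n : ℂ) + 2) = (n : ℂ) + 2 by simp [map_ofNat]]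
  ring

lemma cconst_mul_conj : cconst n * (starRingEnd ℂ) (cconst n) = 1 := by
  rw [conj_cconst, cconst, ← Complex.exp_add, add_neg_cancel, Complex.exp_zero]

lemma cconst_pow : cconst n ^ (n + 2) = -1 := by
  rw [cconst, ← Complex.exp_nat_mul]
  rw [show ((n + 2 : ℕ) : ℂ) * (↑Real.pi * Complex.I / ((n : ℂ) + 2)) =
      ↑Real.pi * Complex.I by
    push_cast
    rw [mul_comm, div_mul_cancel₀ _ Ncast_ne_zero]]
  exact Complex.exp_pi_mul_I

lemma star_Urot (θ : ℝ) : star (Urot n θ) = Urot n (-θ) := by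
  rw [Matrix.star_eq_conjTranspose, Urot_conjTranspose]

lemma Phi_unitary : cconst n • Dmat n ∈ Matrix.unitaryGroup (Fin (n + 2)) ℂ := by
  rw [Matrix.mem_unitaryGroup_iff, star_smul, Matrix.star_eq_conjTranspose, Dmat_conjTranspose]
  simp only [smul_mul_assoc, mul_smul_comm, smul_smul, Dmat_mul_self]
  rw [show star (cconst n) * cconst n = 1 from by rw [mul_comm]; exact cconst_mul_conj, one_smul]

lemma Phi_mem : cconst n • Dmat n ∈ Matrix.specialUnitaryGroup (Fin (n + 2)) ℂ := by
  rw [Matrix.mem_specialUnitaryGroup_iff]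
  refine ⟨Phi_unitary, ?_⟩
  rw [Matrix.det_smul, det_Dmat, Fintype.card_fin, cconst_pow]
  ring

lemma Urot_unitary (θ : ℝ) : Urot n θ ∈ Matrix.unitaryGroup (Fin (n + 2)) ℂ := by
  rw [Matrix.mem_unitaryGroup_iff, star_Urot, Urot_mul, add_neg_cancel, Urot_zero]

lemma det_Urot_mul_det_Urot (θ : ℝ) : (Urot n θ).det * (Urot n (-θ)).det = 1 := by
  rw [← Matrix.det_mul, Urot_mul, add_neg_cancel, Urot_zero, Matrix.det_one]

lemma B_mem (θ : ℝ) : Urot n θ * (cconst n • Dmat n) * Urot n (-θ) ∈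
    Matrix.specialUnitaryGroup (Fin (n + 2)) ℂ := by
  rw [Matrix.mem_specialUnitaryGroup_iff]
  constructor
  · exact mul_mem (mul_mem (Urot_unitary θ) Phi_unitary) (Urot_unitary (-θ))
  · rw [Matrix.det_mul, Matrix.det_mul]
    have h1 : (cconst n • Dmat n).det = 1 :=
      (Matrix.mem_specialUnitaryGroup_iff.mp Phi_mem).2
    calc (Urot n θ).det * (cconst n • Dmat n).det * (Urot n (-θ)).det
        = ((Urot n θ).det * (Urot n (-θ)).det) * (cconst n • Dmat n).det := by ring
      _ = 1 := by rw [det_Urot_mul_det_Urot, one_mul, h1]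

end su

noncomputable instance SUGroup {n : ℕ} : Group ↥(Matrix.specialUnitaryGroup (Fin (n + 2)) ℂ) :=
  { (inferInstance : Monoid ↥(Matrix.specialUnitaryGroup (Fin (n + 2)) ℂ)) with
    inv := fun A => ⟨star (A : Matrix (Fin (n + 2)) (Fin (n + 2)) ℂ), by
      rw [Matrix.mem_specialUnitaryGroup_iff]
      obtain ⟨hu, hd⟩ := Matrix.mem_specialUnitaryGroup_iff.mp A.2
      refine ⟨Unitary.star_mem hu, ?_⟩
      rw [Matrix.star_eq_conjTranspose, Matrix.det_conjTranspose, hd, star_one]⟩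
    inv_mul_cancel := fun A => Subtype.ext
      (Matrix.mem_unitaryGroup_iff'.mp (Matrix.mem_specialUnitaryGroup_iff.mp A.2).1) }

/-- The single relator `(ab)^k a ((ba)^k b)⁻¹` of the torus knot group
`G = ⟨a, b | (ab)^k a = (ba)^k b⟩ = π₁(ℝ³ \ T(2,2k+1))`. -/
def torusRel (k : ℕ) : Set (FreeGroup (Fin 2)) :=
  {(FreeGroup.of 0 * FreeGroup.of 1) ^ k * FreeGroup.of 0 *
    ((FreeGroup.of 1 * FreeGroup.of 0) ^ k * FreeGroup.of 1)⁻¹}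

/-- With `N = n+2 ≥ 2` and `θ ∈ [0,π/2]`, the assignment `a ↦ Φ`,
`b ↦ U_θ Φ U_{-θ}` extends to a group homomorphism `⟨a,b | (ab)^k a = (ba)^k b⟩ → SU(N)`
if and only if `(2k+1)θ ∈ πℤ`. -/
theorem stmt_9 (n k : ℕ) (θ : ℝ) (hθ : θ ∈ Set.Icc 0 (Real.pi / 2))
    (Φ : Matrix (Fin (n + 2)) (Fin (n + 2)) ℂ)
    (hΦ : Φ = Complex.exp (Real.pi * Complex.I / ((n : ℂ) + 2)) •
      Matrix.diagonal (fun i : Fin (n + 2) => if (i : ℕ) = 0 then (-1 : ℂ) else 1)) :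
    (∃ φ : PresentedGroup (torusRel k) →*
        ↥(Matrix.specialUnitaryGroup (Fin (n + 2)) ℂ),
      ((φ (PresentedGroup.of 0) : Matrix (Fin (n + 2)) (Fin (n + 2)) ℂ) = Φ ∧
       (φ (PresentedGroup.of 1) : Matrix (Fin (n + 2)) (Fin (n + 2)) ℂ) =
         Urot n θ * Φ * Urot n (-θ))) ↔
      ∃ z : ℤ, (2 * (k : ℝ) + 1) * θ = z * Real.pi := by
  have hΦ' : Φ = cconst n • Dmat n := hΦ
  clear hΦ
  subst hΦ'
  constructor
  · rintro ⟨φ, hφ0, hφ1⟩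
    have hmem : (FreeGroup.of 0 * FreeGroup.of 1) ^ k * FreeGroup.of 0 *
        ((FreeGroup.of 1 * FreeGroup.of 0) ^ k * FreeGroup.of 1)⁻¹ ∈
        Subgroup.normalClosure (torusRel k) :=
      Subgroup.subset_normalClosure rfl
    have hrel0 : PresentedGroup.mk (torusRel k)
        ((FreeGroup.of 0 * FreeGroup.of 1) ^ k * FreeGroup.of 0 *
          ((FreeGroup.of 1 * FreeGroup.of 0) ^ k * FreeGroup.of 1)⁻¹) = 1 :=
      (QuotientGroup.eq_one_iff _).mpr hmem
    rw [map_mul, map_inv, mul_inv_eq_one, map_mul, map_pow, map_mul, map_mul, map_pow,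
      map_mul] at hrel0
    have hrel := congrArg φ hrel0
    simp only [map_mul, map_pow] at hrel
    rw [show PresentedGroup.mk (torusRel k) (FreeGroup.of 0) = PresentedGroup.of 0 from rfl,
      show PresentedGroup.mk (torusRel k) (FreeGroup.of 1) = PresentedGroup.of 1 from rfl]
      at hrel
    have hmat := congrArg
      (fun x : Matrix.specialUnitaryGroup (Fin (n + 2)) ℂ =>
        (x : Matrix (Fin (n + 2)) (Fin (n + 2)) ℂ)) hrel
    simp only [MulMemClass.coe_mul, SubmonoidClass.coe_pow] at hmat
    rw [hφ0, hφ1] at hmat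
    have hrot := (relation_iff k θ (cconst n) cconst_ne_zero).mp hmat
    have h00 : (Real.cos ((4 * (k : ℝ) + 2) * θ) : ℂ) = 1 := by
      have := congrFun (congrFun hrot 0) 0
      simpa [Urot, Matrix.one_apply, ← Complex.ofReal_cos] using this
    have hcos : Real.cos ((4 * (k : ℝ) + 2) * θ) = 1 := by exact_mod_cast h00
    obtain ⟨m, hm⟩ := (Real.cos_eq_one_iff _).mp hcos
    exact ⟨m, by linarith⟩
  · rintro ⟨z, hz⟩
    have hcos : Real.cos ((4 * (k : ℝ) + 2) * θ) = 1 := by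
      rw [show (4 * (k : ℝ) + 2) * θ = (z : ℝ) * (2 * Real.pi) by linarith]
      exact (Real.cos_eq_one_iff _).mpr ⟨z, rfl⟩
    have hrot : Urot n ((4 * (k : ℝ) + 2) * θ) = 1 := Urot_eq_one_of_cos _ hcos
    have hmat := (relation_iff k θ (cconst n) cconst_ne_zero).mpr hrot
    refine ⟨PresentedGroup.toGroup (f := ![⟨cconst n • Dmat n, Phi_mem⟩,
      ⟨Urot n θ * (cconst n • Dmat n) * Urot n (-θ), B_mem θ⟩]) ?_, ?_, ?_⟩
    · intro r hr
      simp only [torusRel, Set.mem_singleton_iff] at hr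
      subst hr
      simp only [map_mul, map_pow, map_inv, FreeGroup.lift_apply_of]
      rw [mul_inv_eq_one]
      apply Subtype.ext
      simp only [MulMemClass.coe_mul, SubmonoidClass.coe_pow, Matrix.cons_val_zero,
        Matrix.cons_val_one, Matrix.head_cons]
      exact hmat
    · rw [PresentedGroup.toGroup.of]
      rfl
    · rw [PresentedGroup.toGroup.of]
      rfl
end

section
/- For N ≥ 1, the abelian group obtained as the homology of the two-term complex ℤ[X]/(X^N) → ℤ[X]/(X^N) given by multiplication by N·X^{N-1} is isomorphic to ℤ^{2N-2} ⊕ ℤ/N (i.e. kernel ⊕ cokernel ≅ ℤ^{2N-2} ⊕ ℤ/N). -/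
open Polynomial

theorem stmt_11_aux (N : ℕ) (hN : 1 ≤ N) :
    Nonempty
      ((↥(LinearMap.ker (LinearMap.mulLeft ℤ
          (AdjoinRoot.mk ((X : Polynomial ℤ) ^ N)
            (C (N : ℤ) * X ^ (N - 1))))) ×
        ((AdjoinRoot ((X : Polynomial ℤ) ^ N)) ⧸
          LinearMap.range (LinearMap.mulLeft ℤ
            (AdjoinRoot.mk ((X : Polynomial ℤ) ^ N)
              (C (N : ℤ) * X ^ (N - 1)))))) ≃ₗ[ℤ]
        (Fin (2 * N - 2) → ℤ) × ZMod N) := by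
  obtain ⟨n, rfl⟩ : ∃ n, N = n + 1 := ⟨N - 1, (Nat.succ_pred_eq_of_pos hN).symm⟩
  let R := AdjoinRoot ((X : Polynomial ℤ) ^ (n + 1))
  let f : R →ₗ[ℤ] R := LinearMap.mulLeft ℤ
      (AdjoinRoot.mk ((X : Polynomial ℤ) ^ (n + 1)) (C ((n + 1 : ℕ) : ℤ) * X ^ n))
  have hfdef : f = LinearMap.mulLeft ℤ
      (AdjoinRoot.mk ((X : Polynomial ℤ) ^ (n + 1)) (C ((n + 1 : ℕ) : ℤ) * X ^ n)) := rfl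
  -- basis
  have hm : ((X : Polynomial ℤ) ^ (n + 1)).Monic := monic_X_pow _
  have hdim : (AdjoinRoot.powerBasis' hm).dim = n + 1 := natDegree_X_pow _
  let b : Module.Basis (Fin (n + 1)) ℤ R := (AdjoinRoot.powerBasis' hm).basis.reindex (finCongr hdim)
  have hb : ∀ i : Fin (n + 1),
      b i = AdjoinRoot.mk ((X : Polynomial ℤ) ^ (n + 1)) ((X : Polynomial ℤ) ^ (i : ℕ)) := by
    intro i
    simp only [b, Module.Basis.reindex_apply, map_pow, AdjoinRoot.mk_X]
    rw [PowerBasis.basis_eq_pow]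
    simp [AdjoinRoot.powerBasis'_gen]
  let b2 : Module.Basis (Fin (n + 1)) ℤ R := b.reindex (Equiv.swap 0 (Fin.last n))
  have hb2 : b2 0 = AdjoinRoot.mk ((X : Polynomial ℤ) ^ (n + 1)) ((X : Polynomial ℤ) ^ n) := by
    have : b2 0 = b (Fin.last n) := by
      simp [b2, Module.Basis.reindex_apply, Equiv.swap_apply_left]
    rw [this, hb]
    simp
  -- the product model
  let Pa : (Fin (n + 1) → ℤ) ≃+ ℤ × (Fin n → ℤ) :=
    { toFun := fun a => (a 0, fun j => a j.succ)
      invFun := fun x => Fin.cons x.1 x.2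
      left_inv := fun a => Fin.cons_self_tail a
      right_inv := fun x => by
        ext j <;> simp [Fin.cons_zero, Fin.cons_succ]
      map_add' := fun a b => rfl }
  let P : (Fin (n + 1) → ℤ) ≃ₗ[ℤ] ℤ × (Fin n → ℤ) := Pa.toIntLinearEquiv
  let E1 : R ≃ₗ[ℤ] ℤ × (Fin n → ℤ) := b.equivFun.trans P
  let E2 : R ≃ₗ[ℤ] ℤ × (Fin n → ℤ) := b2.equivFun.trans P
  let m : ℤ →ₗ[ℤ] ℤ := ((n + 1 : ℕ) : ℤ) • LinearMap.id
  let h : (ℤ × (Fin n → ℤ)) →ₗ[ℤ] ℤ × (Fin n → ℤ) :=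
    m.prodMap (0 : (Fin n → ℤ) →ₗ[ℤ] Fin n → ℤ)
  have hcomp : E2.toLinearMap.comp f = h.comp E1.toLinearMap := by
    apply b.ext
    intro i
    simp only [LinearMap.comp_apply, LinearEquiv.coe_coe]
    have hE1 : E1 (b i) = ((if i = 0 then (1:ℤ) else 0),
        fun j : Fin n => if i = j.succ then (1:ℤ) else 0) := by
      simp [E1, P, Pa, Module.Basis.equivFun_self, AddEquiv.coe_toIntLinearEquiv, Finsupp.single_apply, Prod.ext_iff, funext_iff]
      constructor
      · show (Finsupp.single i (1:ℤ)) 0 = _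
        simp [Finsupp.single_apply, eq_comm]
      · intro x
        show (Finsupp.single i (1:ℤ)) x.succ = _
        simp [Finsupp.single_apply, eq_comm]
    rw [hE1]
    by_cases hi : i = 0
    · subst hi
      have hf0 : f (b 0) = (n + 1) • b2 0 := by
        rw [hb 0, hb2, hfdef]
        simp only [LinearMap.mulLeft_apply, Fin.val_zero, pow_zero, map_one, mul_one,
          nsmul_eq_mul]
        rw [← map_natCast (AdjoinRoot.mk ((X : Polynomial ℤ) ^ (n + 1))) (n + 1), ← map_mul]
        congr 1
      rw [hf0, map_nsmul]
      have hE2 : E2 (b2 0) = ((1:ℤ), fun j : Fin n => if (0 : Fin (n+1)) = j.succ then (1:ℤ) else 0) := by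
        simp [E2, P, Pa, Module.Basis.equivFun_self, AddEquiv.coe_toIntLinearEquiv, Finsupp.single_apply, Prod.ext_iff, funext_iff]
        constructor
        · show (Finsupp.single (0 : Fin (n + 1)) (1:ℤ)) 0 = _
          simp [Finsupp.single_apply]
        · intro x
          show (Finsupp.single (0 : Fin (n + 1)) (1:ℤ)) x.succ = _
          simp [Finsupp.single_apply, (Fin.succ_ne_zero x).symm]
      rw [hE2]
      have hz : (fun j : Fin n => if (0 : Fin (n + 1)) = j.succ then (1 : ℤ) else 0) = 0 := by
        funext j
        simp [(Fin.succ_ne_zero j).symm]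
      rw [hz]
      simp [h, m, Prod.ext_iff, nsmul_eq_mul]
    · have hf0 : f (b i) = 0 := by
        rw [hb i, hfdef]
        simp only [LinearMap.mulLeft_apply]
        rw [← map_mul]
        rw [AdjoinRoot.mk_eq_zero]
        rw [mul_assoc, ← pow_add]
        refine Dvd.dvd.mul_left ?_ _
        refine pow_dvd_pow _ ?_
        have : (i : ℕ) ≠ 0 := fun hc => hi (Fin.ext hc)
        omega
      rw [hf0, map_zero]
      simp [h, m, Prod.ext_iff, hi]
  -- kernel
  have hker : LinearMap.ker f =
      Submodule.map (E1.symm : (ℤ × (Fin n → ℤ)) →ₗ[ℤ] R) (LinearMap.ker h) := by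
    rw [← Submodule.comap_equiv_eq_map_symm, ← LinearMap.ker_comp, ← hcomp,
      LinearEquiv.ker_comp]
  have hrange : Submodule.map E2.toLinearMap (LinearMap.range f) = LinearMap.range h := by
    rw [← LinearMap.range_comp, hcomp, LinearMap.range_comp, LinearEquiv.range, Submodule.map_top]
  let e_ker : ↥(LinearMap.ker f) ≃ₗ[ℤ] ↥(LinearMap.ker h) :=
    (LinearEquiv.ofEq _ _ hker).trans (E1.symm.submoduleMap (LinearMap.ker h)).symm
  have hkh : LinearMap.ker h = Submodule.prod ⊥ ⊤ := by
    rw [LinearMap.ker_prodMap]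
    congr 1
    · ext x
      constructor
      · intro hx
        have hx' : ((n + 1 : ℕ) : ℤ) * x = 0 := hx
        simp only [Submodule.mem_bot]
        rcases mul_eq_zero.mp hx' with h1 | h1
        · exact absurd h1 (by exact_mod_cast Nat.succ_ne_zero n)
        · exact h1
      · intro hx
        simp only [Submodule.mem_bot] at hx
        subst hx
        simp
    · exact LinearMap.ker_zero
  let ebt : ↥(Submodule.prod (⊥ : Submodule ℤ ℤ) (⊤ : Submodule ℤ (Fin n → ℤ))) ≃ₗ[ℤ] (Fin n → ℤ) :=
    { toFun := fun x => (x : ℤ × (Fin n → ℤ)).2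
      map_add' := fun _ _ => rfl
      map_smul' := fun _ _ => rfl
      invFun := fun v => ⟨(0, v), ⟨Submodule.zero_mem _, trivial⟩⟩
      left_inv := fun x => by
        apply Subtype.ext
        have h1 : (x : ℤ × (Fin n → ℤ)).1 ∈ (⊥ : Submodule ℤ ℤ) := x.2.1
        simp only [Submodule.mem_bot] at h1
        exact Prod.ext h1.symm rfl
      right_inv := fun v => rfl }
  let e_kh : ↥(LinearMap.ker h) ≃ₗ[ℤ] (Fin n → ℤ) := (LinearEquiv.ofEq _ _ hkh).trans ebt
  -- cokernel
  let S : Submodule ℤ ℤ := Ideal.span {((n + 1 : ℕ) : ℤ)}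
  have hrh : LinearMap.range h = Submodule.prod S ⊥ := by
    apply le_antisymm
    · rintro x ⟨y, rfl⟩
      refine ⟨?_, ?_⟩
      · simp only [h, LinearMap.prodMap_apply, m, LinearMap.smul_apply, LinearMap.id_coe,
          id_eq, smul_eq_mul, S]
        exact Ideal.mem_span_singleton.mpr (dvd_mul_right _ _)
      · simp [h]
    · rintro ⟨x1, x2⟩ hx
      rw [Submodule.mem_prod] at hx
      obtain ⟨hx1, hx2⟩ := hx
      rw [Submodule.mem_bot] at hx2
      obtain ⟨c, hc⟩ := Ideal.mem_span_singleton.mp hx1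
      exact ⟨(c, 0), Prod.ext hc.symm hx2.symm⟩
  let e_cok1 : (R ⧸ LinearMap.range f) ≃ₗ[ℤ] ((ℤ × (Fin n → ℤ)) ⧸ LinearMap.range h) :=
    Submodule.Quotient.equiv _ _ E2 hrange
  let φ : (ℤ × (Fin n → ℤ)) →ₗ[ℤ] (ℤ ⧸ S) × (Fin n → ℤ) :=
    S.mkQ.prodMap (LinearMap.id : (Fin n → ℤ) →ₗ[ℤ] Fin n → ℤ)
  have hφsurj : Function.Surjective φ :=
    (S.mkQ_surjective).prodMap Function.surjective_id
  have hφker : LinearMap.ker φ = Submodule.prod S ⊥ := by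
    rw [LinearMap.ker_prodMap, Submodule.ker_mkQ, LinearMap.ker_id]
  let e_cok2 : ((ℤ × (Fin n → ℤ)) ⧸ LinearMap.range h) ≃ₗ[ℤ] (ℤ ⧸ S) × (Fin n → ℤ) :=
    (Submodule.quotEquivOfEq _ _ (by rw [hrh, ← hφker])).trans
      (φ.quotKerEquivOfSurjective hφsurj)
  let e_zmod : (ℤ ⧸ S) ≃ₗ[ℤ] ZMod (n + 1) :=
    (Int.quotientSpanNatEquivZMod (n + 1)).toAddEquiv.toIntLinearEquiv
  -- final assembly
  let eT : ((Fin n → ℤ) × (Fin n → ℤ)) ≃ₗ[ℤ] (Fin (2 * (n + 1) - 2) → ℤ) :=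
    (LinearEquiv.sumArrowLequivProdArrow (Fin n) (Fin n) ℤ ℤ).symm.trans
      (LinearEquiv.funCongrLeft ℤ ℤ
        ((finCongr (by omega : 2 * (n + 1) - 2 = n + n)).trans finSumFinEquiv.symm))
  refine ⟨?_⟩
  exact ((e_ker.trans e_kh).prodCongr (e_cok1.trans (e_cok2.trans
      (LinearEquiv.prodCongr e_zmod (LinearEquiv.refl ℤ (Fin n → ℤ)))))).trans
    (((LinearEquiv.refl ℤ (Fin n → ℤ)).prodCongr (LinearEquiv.prodComm ℤ _ _)).trans
      (((LinearEquiv.prodAssoc ℤ (Fin n → ℤ) (Fin n → ℤ) (ZMod (n+1))).symm).trans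
        (LinearEquiv.prodCongr eT (LinearEquiv.refl ℤ (ZMod (n + 1))))))

/-- For `N ≥ 1`, the homology of the two-term complex
`ℤ[X]/(X^N) → ℤ[X]/(X^N)` given by multiplication by `N·X^{N-1}`, i.e. the direct sum of
the kernel and the cokernel, is isomorphic to `ℤ^{2N-2} ⊕ ℤ/N`. -/
theorem stmt_11 (N : ℕ) (hN : 1 ≤ N) :
    Nonempty
      ((↥(LinearMap.ker (LinearMap.mulLeft ℤ
          (Ideal.Quotient.mk (Ideal.span {(X : Polynomial ℤ) ^ N})
            (C (N : ℤ) * X ^ (N - 1))))) ×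
        ((Polynomial ℤ ⧸ Ideal.span {(X : Polynomial ℤ) ^ N}) ⧸
          LinearMap.range (LinearMap.mulLeft ℤ
            (Ideal.Quotient.mk (Ideal.span {(X : Polynomial ℤ) ^ N})
              (C (N : ℤ) * X ^ (N - 1)))))) ≃ₗ[ℤ]
        (Fin (2 * N - 2) → ℤ) × ZMod N) :=
  stmt_11_aux N hN
end
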